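/- Let σ = (σ_n) be a sequence of substitutions satisfying the recurrence property (R): there exist strictly increasing sequences (n_k), (ℓ_k) with (σ_{n_k}, σ_{n_k+1}, …, σ_{n_k+ℓ_k−1}) = (σ_0, σ_1, …, σ_{ℓ_k−1}) for all k. Then for any k_0 < k_1 < ⋯ < k_s with n_{k_j} + ℓ_{k_j} ≤ ℓ_{k_{j+1}} for all 0 ≤ j < s, one has σ_{[0, n_{k_0}+n_{k_1}+⋯+n_{k_s})} = σ_{[0,n_{k_s})} ⋯ σ_{[0,n_{k_1})} σ_{[0,n_{k_0})}, where σ_{[0,n)} = σ_0 σ_1 ⋯ σ_{n−1}. -/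

import Mathlib

/-- Apply a substitution to a word. -/
def applyWord (σ : Fin 2 → List (Fin 2)) (w : List (Fin 2)) : List (Fin 2) :=
  w.flatMap σ

/-- The composed substitution `σ_{[0,n)} = σ_0 σ_1 ⋯ σ_{n−1}`. -/
def compSub (σ : ℕ → Fin 2 → List (Fin 2)) : ℕ → Fin 2 → List (Fin 2)
  | 0 => fun i => [i]
  | n + 1 => fun i => applyWord (compSub σ n) (σ n i)

lemma applyWord_applyWord (f g : Fin 2 → List (Fin 2)) (w : List (Fin 2)) :
    applyWord f (applyWord g w) = applyWord (fun i => applyWord f (g i)) w := by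
  simp [applyWord, List.flatMap_assoc]

lemma compSub_add (σ : ℕ → Fin 2 → List (Fin 2)) (a b : ℕ) :
    compSub σ (a + b) =
      fun i => applyWord (compSub σ a) (compSub (fun m => σ (a + m)) b i) := by
  induction b with
  | zero =>
    funext i
    show compSub σ a i = applyWord (compSub σ a) [i]
    simp [applyWord]
  | succ b ih =>
    funext i
    show applyWord (compSub σ (a + b)) (σ (a + b) i) = _
    rw [ih]
    show _ = applyWord (compSub σ a) (applyWord (compSub (fun m => σ (a + m)) b) (σ (a + b) i))
    rw [applyWord_applyWord]

lemma compSub_congr (σ τ : ℕ → Fin 2 → List (Fin 2)) (b : ℕ)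
    (h : ∀ m, m < b → σ m = τ m) : compSub σ b = compSub τ b := by
  induction b with
  | zero => rfl
  | succ b ih =>
    funext i
    show applyWord (compSub σ b) (σ b i) = applyWord (compSub τ b) (τ b i)
    rw [ih (fun m hm => h m (Nat.lt_succ_of_lt hm)), h b (Nat.lt_succ_self b)]

lemma sum_map_le_of_chain (n ℓ : ℕ → ℕ) :
    ∀ (L : List ℕ) (k : ℕ),
      List.Chain' (fun a b => n a + ℓ a ≤ ℓ b) (L ++ [k]) →
      (L.map n).sum ≤ ℓ k := by
  intro L
  induction L using List.reverseRecOn with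
  | nil => intro k _; simp
  | append_singleton M j ih =>
    intro k h
    have h' : List.Chain' (fun a b => n a + ℓ a ≤ ℓ b) ((M ++ [j]) ++ [k]) := h
    rw [List.Chain', List.isChain_append] at h'
    obtain ⟨h1, -, h3⟩ := h'
    have hjk : n j + ℓ j ≤ ℓ k := by
      apply h3 j _ k rfl
      simp
    have hM : (M.map n).sum ≤ ℓ j := ih j h1
    simp only [List.map_append, List.sum_append, List.map_cons, List.map_nil,
      List.sum_cons, List.sum_nil]
    omega

lemma compSub_foldl (σ : ℕ → Fin 2 → List (Fin 2)) (n ℓ : ℕ → ℕ)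
    (hR : ∀ k : ℕ, ∀ m : ℕ, m < ℓ k → σ (n k + m) = σ m) :
    ∀ L : List ℕ, List.Chain' (fun a b => n a + ℓ a ≤ ℓ b) L →
      compSub σ (L.map n).sum =
        fun i => L.foldl (fun w k => applyWord (compSub σ (n k)) w) [i] := by
  intro L
  induction L using List.reverseRecOn with
  | nil => intro _; rfl
  | append_singleton L k ih =>
    intro h
    have hL : List.Chain' (fun a b => n a + ℓ a ≤ ℓ b) L :=
      h.prefix (L.prefix_append [k])
    have hsum : (L.map n).sum ≤ ℓ k := sum_map_le_of_chain n ℓ L k h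
    funext i
    have hS : ((L ++ [k]).map n).sum = n k + (L.map n).sum := by
      simp [Nat.add_comm]
    rw [hS, compSub_add]
    rw [compSub_congr (fun m => σ (n k + m)) σ _
      (fun m hm => hR k m (lt_of_lt_of_le hm hsum))]
    rw [ih hL]
    simp [List.foldl_append]

theorem compSub_recurrence (σ : ℕ → Fin 2 → List (Fin 2))
    (n ℓ : ℕ → ℕ) (hn : StrictMono n) (hℓ : StrictMono ℓ)
    (hR : ∀ k : ℕ, ∀ m : ℕ, m < ℓ k → σ (n k + m) = σ m)
    (s : ℕ) (ks : Fin (s + 1) → ℕ) (hks : StrictMono ks)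
    (hchain : ∀ j : Fin s,
      n (ks j.castSucc) + ℓ (ks j.castSucc) ≤ ℓ (ks j.succ)) :
    compSub σ (∑ j : Fin (s + 1), n (ks j)) =
      fun i => (List.ofFn ks).foldl
        (fun w k => applyWord (compSub σ (n k)) w) [i] := by
  have hchain' : List.Chain' (fun a b => n a + ℓ a ≤ ℓ b) (List.ofFn ks) := by
    rw [List.Chain', List.isChain_iff_getElem]
    intro i hi
    simp only [List.length_ofFn] at hi
    have hi' : i < s := by omega
    have h := hchain ⟨i, hi'⟩
    simp only [List.getElem_ofFn]
    convert h using 3 <;> simp [Fin.castSucc, Fin.succ, Fin.ext_iff]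
  have hsum : ((List.ofFn ks).map n).sum = ∑ j : Fin (s + 1), n (ks j) := by
    rw [List.map_ofFn, List.sum_ofFn]; rfl
  rw [← hsum]
  exact compSub_foldl σ n ℓ hR (List.ofFn ks) hchain'
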